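/- arXiv:1910.07015 — 2 statements merged into one kernel-verified Lean document; each statement's English description precedes it below -/
import Mathlib

section
/- Let Σ be a K×K symmetric positive-definite matrix with Σ⁻¹ having non-positive off-diagonal entries, and α ∈ ℝ^K strictly positive. Define V(q) = αᵀ(Σ⁻¹ + diag(q))⁻¹α. Then for every q ∈ ℝ_{≥0}^K and every pair i ≠ j, the cross-partial ∂²V/∂q_i∂q_j (q) ≥ 0 (i.e., the sources are substitutes). -/
open Matrix

theorem mmatrix_mulVec_nonneg {K : ℕ} {B : Matrix (Fin K) (Fin K) ℝ} (hB : B.PosDef)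
    (hoff : ∀ i j, i ≠ j → B i j ≤ 0) {b : Fin K → ℝ} (hb : ∀ k, 0 ≤ b k) :
    ∀ k, 0 ≤ (B⁻¹ *ᵥ b) k := by
  set x := B⁻¹ *ᵥ b with hx
  have hBx : B *ᵥ x = b := by
    rw [hx, mulVec_mulVec, mul_nonsing_inv _ (isUnit_iff_ne_zero.mpr hB.det_pos.ne'), one_mulVec]
  set u : Fin K → ℝ := fun k => max (x k) 0 with hu
  set w : Fin K → ℝ := fun k => max (-x k) 0 with hw
  have hxuw : x = u - w := by
    funext k; simp only [hu, hw, Pi.sub_apply]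
    rcases le_total (x k) 0 with h | h
    · rw [max_eq_right h, max_eq_left (by linarith)]; ring
    · rw [max_eq_left h, max_eq_right (by linarith)]; ring
  have huw : ∀ k, w k * u k = 0 := by
    intro k; simp only [hu, hw]
    rcases le_total (x k) 0 with h | h
    · rw [max_eq_right h]; ring
    · rw [max_eq_right (by linarith : -x k ≤ 0)]; ring
  have hw0 : ∀ k, 0 ≤ w k := fun k => le_max_right _ _
  have hu0 : ∀ k, 0 ≤ u k := fun k => le_max_right _ _
  have key : w ⬝ᵥ (B *ᵥ w) ≤ 0 := by
    have h1 : w ⬝ᵥ (B *ᵥ u) ≤ 0 := by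
      rw [dotProduct, ]
      apply Finset.sum_nonpos
      intro k _
      rw [mulVec, dotProduct, Finset.mul_sum]
      apply Finset.sum_nonpos
      intro l _
      rcases eq_or_ne k l with rfl | hkl
      · rw [show w k * (B k k * u k) = B k k * (w k * u k) by ring, huw k, mul_zero]
      · exact mul_nonpos_of_nonneg_of_nonpos (hw0 k)
          (mul_nonpos_of_nonpos_of_nonneg (hoff k l hkl) (hu0 l))
    have h2 : 0 ≤ w ⬝ᵥ b := Finset.sum_nonneg fun k _ => mul_nonneg (hw0 k) (hb k)
    have h3 : w ⬝ᵥ (B *ᵥ x) = w ⬝ᵥ (B *ᵥ u) - w ⬝ᵥ (B *ᵥ w) := by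
      rw [hxuw, sub_eq_add_neg, mulVec_add, dotProduct_add, mulVec_neg, dotProduct_neg]
      ring
    rw [hBx] at h3
    linarith
  have hweq : w = 0 := by
    by_contra hne
    have := hB.dotProduct_mulVec_pos hne
    rw [star_trivial] at this
    linarith
  intro k
  have : x k = u k := by rw [hxuw]; simp [hweq]
  rw [this] at *
  exact hu0 k


-- algebra evaluation lemmas
lemma eval_entry {K : ℕ} (M : Matrix (Fin K) (Fin K) ℝ) (α : Fin K → ℝ) (i j : Fin K) :
    ((M * diagonal (Pi.single j 1) * M) *ᵥ α) i = M i j * ((M *ᵥ α) j) := by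
  rw [← mulVec_mulVec, ← mulVec_mulVec]
  have hdiag : diagonal (Pi.single j 1) *ᵥ (M *ᵥ α) = Pi.single j ((M *ᵥ α) j) := by
    ext k
    rw [mulVec_diagonal]
    rcases eq_or_ne k j with rfl | hkj
    · simp
    · simp [Pi.single_eq_of_ne hkj]
  rw [hdiag, mulVec_single]
  simp [mul_comm]

lemma eval_quad {K : ℕ} (M : Matrix (Fin K) (Fin K) ℝ) (hM : Mᵀ = M) (α : Fin K → ℝ)
    (i : Fin K) :
    α ⬝ᵥ ((M * diagonal (Pi.single i 1) * M) *ᵥ α) = ((M *ᵥ α) i) ^ 2 := by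
  rw [← mulVec_mulVec, ← mulVec_mulVec]
  have hdiag : diagonal (Pi.single i 1) *ᵥ (M *ᵥ α) = Pi.single i ((M *ᵥ α) i) := by
    ext k
    rw [mulVec_diagonal]
    rcases eq_or_ne k i with rfl | hki
    · simp
    · simp [Pi.single_eq_of_ne hki]
  have hsym : ∀ k l, M k l = M l k := fun k l => by
    conv_lhs => rw [← hM]
    rfl
  rw [hdiag, mulVec_single, dotProduct]
  simp only [Pi.smul_apply, MulOpposite.smul_eq_mul_unop, MulOpposite.unop_op, col_apply]
  have : ∀ k, α k * (M k i * (M *ᵥ α) i) = (M i k * α k) * (M *ᵥ α) i := fun k => by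
    rw [hsym k i]; ring
  rw [Finset.sum_congr rfl fun k _ => this k, ← Finset.sum_mul]
  rw [show (M *ᵥ α) i = ∑ k, M i k * α k from rfl]
  ring

lemma open_unit_set {K : ℕ} (A : Matrix (Fin K) (Fin K) ℝ) :
    IsOpen {p : Fin K → ℝ | IsUnit (A + diagonal p)} := by
  have hcont : Continuous fun p : Fin K → ℝ => (A + diagonal p).det := by
    have h1 : Continuous fun p : Fin K → ℝ => A + diagonal p :=
      continuous_const.add (continuous_id.matrix_diagonal)
    exact h1.matrix_det
  have : {p : Fin K → ℝ | IsUnit (A + diagonal p)}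
      = (fun p : Fin K → ℝ => (A + diagonal p).det) ⁻¹' {(0 : ℝ)}ᶜ := by
    ext p
    simp [Matrix.isUnit_iff_isUnit_det, isUnit_iff_ne_zero]
  rw [this]
  exact (isOpen_compl_singleton).preimage hcont


section Calc
attribute [local instance] Matrix.linftyOpNormedRing Matrix.linftyOpNormedAlgebra

variable {K : ℕ}

noncomputable def diagCLM (K : ℕ) : (Fin K → ℝ) →L[ℝ] Matrix (Fin K) (Fin K) ℝ :=
  LinearMap.toContinuousLinearMap
    { toFun := fun r => diagonal r
      map_add' := fun x y => (diagonal_add x y).symm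
      map_smul' := fun c x => diagonal_smul c x }

lemma diagCLM_apply (r : Fin K → ℝ) : diagCLM K r = diagonal r := by
  rw [diagCLM, LinearMap.coe_toContinuousLinearMap']; rfl

noncomputable def psiCLM (K : ℕ) (α : Fin K → ℝ) : Matrix (Fin K) (Fin K) ℝ →L[ℝ] ℝ :=
  LinearMap.toContinuousLinearMap
    { toFun := fun N => α ⬝ᵥ (N *ᵥ α)
      map_add' := fun N M => by simp [add_mulVec, dotProduct_add]
      map_smul' := fun c N => by simp [smul_mulVec, dotProduct_smul] }

lemma psiCLM_apply (α : Fin K → ℝ) (N : Matrix (Fin K) (Fin K) ℝ) :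
    psiCLM K α N = α ⬝ᵥ (N *ᵥ α) := by
  rw [psiCLM, LinearMap.coe_toContinuousLinearMap']; rfl

noncomputable def chiCLM (K : ℕ) (α : Fin K → ℝ) (i : Fin K) :
    Matrix (Fin K) (Fin K) ℝ →L[ℝ] ℝ :=
  LinearMap.toContinuousLinearMap
    { toFun := fun N => (N *ᵥ α) i
      map_add' := fun N M => by simp [add_mulVec]
      map_smul' := fun c N => by simp [smul_mulVec] }

lemma chiCLM_apply (α : Fin K → ℝ) (i : Fin K) (N : Matrix (Fin K) (Fin K) ℝ) :
    chiCLM K α i N = (N *ᵥ α) i := by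
  rw [chiCLM, LinearMap.coe_toContinuousLinearMap']; rfl

lemma aux_hasFDerivAt (A : Matrix (Fin K) (Fin K) ℝ) (L : Matrix (Fin K) (Fin K) ℝ →L[ℝ] ℝ)
    {p : Fin K → ℝ} (h : IsUnit (A + diagonal p)) :
    HasFDerivAt (fun r : Fin K → ℝ => L ((A + diagonal r)⁻¹))
      (L.comp ((-(ContinuousLinearMap.mulLeftRight ℝ _ ((A + diagonal p)⁻¹)
        ((A + diagonal p)⁻¹))).comp (diagCLM K))) p := by
  obtain ⟨u, hu⟩ := h
  have hg : HasFDerivAt (fun r : Fin K → ℝ => A + diagonal r) (diagCLM K) p := by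
    have := (diagCLM K).hasFDerivAt.const_add (x := p) A
    simp only [diagCLM_apply] at this; exact this
  have hinv : HasFDerivAt (Ring.inverse : Matrix (Fin K) (Fin K) ℝ → _)
      (-(ContinuousLinearMap.mulLeftRight ℝ _ (↑u⁻¹) (↑u⁻¹))) (A + diagonal p) := by
    rw [← hu]; exact hasFDerivAt_ringInverse u
  have hcomp := (L.hasFDerivAt.comp p (hinv.comp p hg))
  have heq : (fun r : Fin K → ℝ => L ((A + diagonal r)⁻¹))
      = fun r => L (Ring.inverse (A + diagonal r)) := by
    funext r; rw [Matrix.nonsing_inv_eq_ringInverse]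
  rw [heq]
  have hcoe : (↑u⁻¹ : Matrix (Fin K) (Fin K) ℝ) = (A + diagonal p)⁻¹ := by
    rw [← hu, Matrix.coe_units_inv]
  rw [← hcoe]
  exact hcomp

lemma fderiv_inner_eval (A : Matrix (Fin K) (Fin K) ℝ) (α : Fin K → ℝ) (i : Fin K)
    {p : Fin K → ℝ} (h : IsUnit (A + diagonal p)) :
    fderiv ℝ (fun r : Fin K → ℝ => α ⬝ᵥ ((A + diagonal r)⁻¹ *ᵥ α)) p (Pi.single i 1)
      = -(α ⬝ᵥ (((A + diagonal p)⁻¹ * diagonal (Pi.single i 1) * (A + diagonal p)⁻¹) *ᵥ α)) := by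
  have h1 := aux_hasFDerivAt A (psiCLM K α) h
  have h2 : HasFDerivAt (fun r : Fin K → ℝ => α ⬝ᵥ ((A + diagonal r)⁻¹ *ᵥ α))
      ((psiCLM K α).comp ((-(ContinuousLinearMap.mulLeftRight ℝ _ ((A + diagonal p)⁻¹)
        ((A + diagonal p)⁻¹))).comp (diagCLM K))) p := by
    have heq : (fun r : Fin K → ℝ => α ⬝ᵥ ((A + diagonal r)⁻¹ *ᵥ α))
        = fun r : Fin K → ℝ => psiCLM K α ((A + diagonal r)⁻¹) := by
      funext r; rw [psiCLM_apply]
    rw [heq]; exact h1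
  rw [h2.fderiv]
  show psiCLM K α (-((A + diagonal p)⁻¹ * diagCLM K (Pi.single i 1) * (A + diagonal p)⁻¹)) = _
  rw [map_neg, psiCLM_apply, diagCLM_apply]

lemma hasFDerivAt_entry (A : Matrix (Fin K) (Fin K) ℝ) (α : Fin K → ℝ) (i j : Fin K)
    {p : Fin K → ℝ} (h : IsUnit (A + diagonal p)) :
    ∃ Φ : (Fin K → ℝ) →L[ℝ] ℝ,
      HasFDerivAt (fun r : Fin K → ℝ => (((A + diagonal r)⁻¹) *ᵥ α) i) Φ p ∧
      Φ (Pi.single j 1)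
        = -((((A + diagonal p)⁻¹ * diagonal (Pi.single j 1) * (A + diagonal p)⁻¹) *ᵥ α) i) := by
  refine ⟨(chiCLM K α i).comp ((-(ContinuousLinearMap.mulLeftRight ℝ _ ((A + diagonal p)⁻¹)
        ((A + diagonal p)⁻¹))).comp (diagCLM K)), ?_, ?_⟩
  · have heq : (fun r : Fin K → ℝ => (((A + diagonal r)⁻¹) *ᵥ α) i)
        = fun r : Fin K → ℝ => chiCLM K α i ((A + diagonal r)⁻¹) := by
      funext r; rw [chiCLM_apply]
    rw [heq]; exact aux_hasFDerivAt A (chiCLM K α i) h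
  · show chiCLM K α i (-((A + diagonal p)⁻¹ * diagCLM K (Pi.single j 1) * (A + diagonal p)⁻¹)) = _
    rw [map_neg, chiCLM_apply, diagCLM_apply]

end Calc

theorem stmt_7 {K : ℕ} (S : Matrix (Fin K) (Fin K) ℝ) (hS : S.PosDef)
    (hM : ∀ i j, i ≠ j → S⁻¹ i j ≤ 0)
    (α : Fin K → ℝ) (hα : ∀ i, 0 < α i)
    (q : Fin K → ℝ) (hq : ∀ i, 0 ≤ q i) (i j : Fin K) (hij : i ≠ j) :
    0 ≤ fderiv ℝ
        (fun p : Fin K → ℝ =>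
          fderiv ℝ (fun r : Fin K → ℝ => α ⬝ᵥ ((S⁻¹ + diagonal r)⁻¹ *ᵥ α)) p
            (Pi.single i 1))
        q (Pi.single j 1) := by
  have hA : (S⁻¹).PosDef := hS.inv
  have hAsym : (S⁻¹)ᵀ = S⁻¹ := by
    have h := hA.isHermitian.eq
    rwa [conjTranspose_eq_transpose_of_trivial] at h
  have hBsym : ∀ p : Fin K → ℝ, (S⁻¹ + diagonal p)ᵀ = S⁻¹ + diagonal p := fun p => by
    rw [transpose_add, hAsym, diagonal_transpose]
  have hMsym : ∀ p : Fin K → ℝ, ((S⁻¹ + diagonal p)⁻¹)ᵀ = (S⁻¹ + diagonal p)⁻¹ := fun p => by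
    rw [transpose_nonsing_inv, hBsym]
  have hBq : (S⁻¹ + diagonal q).PosDef :=
    hA.add_posSemidef (PosSemidef.diagonal (Pi.le_def.mpr hq))
  have hqU : IsUnit (S⁻¹ + diagonal q) :=
    (Matrix.isUnit_iff_isUnit_det _).mpr (isUnit_iff_ne_zero.mpr hBq.det_pos.ne')
  -- replace the inner fderiv on a neighborhood
  have hev : (fun p : Fin K → ℝ =>
        fderiv ℝ (fun r : Fin K → ℝ => α ⬝ᵥ ((S⁻¹ + diagonal r)⁻¹ *ᵥ α)) p (Pi.single i 1))
      =ᶠ[nhds q] (fun p : Fin K → ℝ =>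
        -((((S⁻¹ + diagonal p)⁻¹ *ᵥ α) i) * (((S⁻¹ + diagonal p)⁻¹ *ᵥ α) i))) := by
    refine Filter.eventuallyEq_of_mem ((open_unit_set S⁻¹).mem_nhds hqU) ?_
    intro p hp
    show fderiv ℝ (fun r : Fin K → ℝ => α ⬝ᵥ ((S⁻¹ + diagonal r)⁻¹ *ᵥ α)) p (Pi.single i 1) = _
    rw [fderiv_inner_eval S⁻¹ α i hp, eval_quad _ (hMsym p) α i, pow_two]
  rw [hev.fderiv_eq]
  -- differentiate the explicit formula
  obtain ⟨Φ, hΦ, hΦval⟩ := hasFDerivAt_entry S⁻¹ α i j hqU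
  have hG : HasFDerivAt (fun p : Fin K → ℝ =>
      -((((S⁻¹ + diagonal p)⁻¹ *ᵥ α) i) * (((S⁻¹ + diagonal p)⁻¹ *ᵥ α) i)))
      (-((((S⁻¹ + diagonal q)⁻¹ *ᵥ α) i) • Φ + (((S⁻¹ + diagonal q)⁻¹ *ᵥ α) i) • Φ)) q :=
    (hΦ.mul hΦ).neg
  rw [hG.fderiv]
  -- evaluate
  rw [eval_entry] at hΦval
  have hoff : ∀ a b, a ≠ b → (S⁻¹ + diagonal q) a b ≤ 0 := fun a b hab => by
    rw [Matrix.add_apply, diagonal_apply_ne _ hab, add_zero]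
    exact hM a b hab
  have hu : ∀ k, 0 ≤ ((S⁻¹ + diagonal q)⁻¹ *ᵥ α) k :=
    mmatrix_mulVec_nonneg hBq hoff (fun k => (hα k).le)
  have hMij : 0 ≤ (S⁻¹ + diagonal q)⁻¹ i j := by
    have hb : ∀ k, (0:ℝ) ≤ (Pi.single j 1 : Fin K → ℝ) k := fun k => by
      rcases eq_or_ne k j with rfl | h
      · simp
      · simp [Pi.single_eq_of_ne h]
    have := mmatrix_mulVec_nonneg hBq hoff hb i
    rw [mulVec_single] at this
    simpa using this
  simp only [ContinuousLinearMap.neg_apply, ContinuousLinearMap.add_apply,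
    ContinuousLinearMap.smul_apply, hΦval, smul_eq_mul]
  have h1 := hu i
  have h2 := hu j
  nlinarith [mul_nonneg hMij (mul_nonneg h1 h2)]
end

section
/- Let Σ be a K×K symmetric positive-definite matrix with non-positive off-diagonal entries such that Σα has non-negative coordinates, where α ∈ ℝ^K is strictly positive. Define V(q) = αᵀ(Σ⁻¹ + diag(q))⁻¹α. Then for every q ∈ ℝ_{≥0}^K and every pair i ≠ j, ∂²V/∂q_i∂q_j (q) ≤ 0 (the sources are perpetual complements). -/
open Matrix

-- Lemma P: PD Z-matrix, A x ≥ 0 ⇒ x ≥ 0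
lemma lemP {n : ℕ} (A : Matrix (Fin n) (Fin n) ℝ) (hA : A.PosDef)
    (hOff : ∀ k l, k ≠ l → A k l ≤ 0) (x : Fin n → ℝ)
    (hx : ∀ k, 0 ≤ (A *ᵥ x) k) : ∀ k, 0 ≤ x k := by
  set y : Fin n → ℝ := fun k => max (-(x k)) 0 with hy
  have hynn : ∀ k, 0 ≤ y k := fun k => le_max_right _ _
  have hxp : ∀ k, 0 ≤ max (x k) 0 := fun k => le_max_right _ _
  have hsub : (fun k => max (x k) 0) - x = y := by
    funext k
    simp only [Pi.sub_apply, hy]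
    rcases le_total (x k) 0 with h | h
    · rw [max_eq_right h, max_eq_left (by linarith)]; ring
    · rw [max_eq_left h, max_eq_right (by linarith)]; ring
  have key : y ⬝ᵥ (A *ᵥ y) ≤ 0 := by
    have h1 : y ⬝ᵥ (A *ᵥ y) = y ⬝ᵥ (A *ᵥ fun k => max (x k) 0) - y ⬝ᵥ (A *ᵥ x) := by
      rw [← hsub, Matrix.mulVec_sub, dotProduct_sub]
    rw [h1]
    have h2 : y ⬝ᵥ (A *ᵥ fun k => max (x k) 0) ≤ 0 := by
      rw [dotProduct, ]
      apply Finset.sum_nonpos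
      intro k _
      rw [mulVec, dotProduct, Finset.mul_sum]
      apply Finset.sum_nonpos
      intro l _
      rcases eq_or_ne k l with rfl | hkl
      · have h0 : y k * max (x k) 0 = 0 := by
          rcases le_total (x k) 0 with h | h
          · rw [max_eq_right h, mul_zero]
          · rw [hy]; simp only []
            rw [max_eq_right (by linarith : -(x k) ≤ 0), zero_mul]
        have : y k * (A k k * max (x k) 0) = A k k * (y k * max (x k) 0) := by ring
        rw [this, h0, mul_zero]
      · have h4 : A k l * max (x l) 0 ≤ 0 :=
          mul_nonpos_iff.mpr (Or.inr ⟨hOff k l hkl, hxp l⟩)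
        exact mul_nonpos_iff.mpr (Or.inl ⟨hynn k, h4⟩)
    have h3 : 0 ≤ y ⬝ᵥ (A *ᵥ x) := by
      apply Finset.sum_nonneg
      intro k _
      exact mul_nonneg (hynn k) (hx k)
    linarith
  by_contra h
  push_neg at h
  obtain ⟨k, hk⟩ := h
  have hyne : y ≠ 0 := by
    intro h0
    have : y k = 0 := congrFun h0 k
    rw [hy] at this
    simp only [max_eq_right_iff] at this
    linarith
  have := hA.dotProduct_mulVec_pos hyne
  rw [star_trivial] at this
  linarith

lemma lemQ {n : ℕ} (A : Matrix (Fin n) (Fin n) ℝ) (hA : A.PosDef)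
    (hOff : ∀ k l, k ≠ l → A k l ≤ 0) : ∀ k l, 0 ≤ A⁻¹ k l := by
  intro k l
  have hdet : IsUnit A.det := isUnit_iff_isUnit_det A |>.mp hA.isUnit
  have hAA : A * A⁻¹ = 1 := Matrix.mul_nonsing_inv A hdet
  have hx : ∀ m, 0 ≤ (A *ᵥ (A⁻¹ *ᵥ Pi.single l 1)) m := by
    intro m
    rw [Matrix.mulVec_mulVec, hAA, Matrix.one_mulVec]
    rcases eq_or_ne m l with rfl | h
    · simp
    · simp [Pi.single_eq_of_ne h]
  have := lemP A hA hOff _ hx k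
  simpa using this
lemma keySigns {K : ℕ} (S : Matrix (Fin K) (Fin K) ℝ) (hS : S.PosDef)
    (hOff : ∀ i j, i ≠ j → S i j ≤ 0)
    (α : Fin K → ℝ) (hSα : ∀ i, 0 ≤ (S *ᵥ α) i)
    (p : Fin K → ℝ) (hp : ∀ k, 0 < p k) :
    (∀ k, 0 ≤ ((S⁻¹ + diagonal p)⁻¹ *ᵥ α) k) ∧
      ∀ k l, k ≠ l → (S⁻¹ + diagonal p)⁻¹ k l ≤ 0 := by
  set D : Matrix (Fin K) (Fin K) ℝ := diagonal p with hD
  set Din : Matrix (Fin K) (Fin K) ℝ := diagonal (fun k => (p k)⁻¹) with hDin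
  have hSdet : IsUnit S.det := (isUnit_iff_isUnit_det S).mp hS.isUnit
  have hDpos : D.PosDef := posDef_diagonal_iff.mpr hp
  have hDinpos : Din.PosDef := posDef_diagonal_iff.mpr fun k => inv_pos.mpr (hp k)
  have hT : (S⁻¹ + D).PosDef := hS.inv.add hDpos
  have hTdet : IsUnit (S⁻¹ + D).det := (isUnit_iff_isUnit_det _).mp hT.isUnit
  have hNmat : (Din + S).PosDef := hDinpos.add hS
  have hNdet : IsUnit (Din + S).det := (isUnit_iff_isUnit_det _).mp hNmat.isUnit
  set N : Matrix (Fin K) (Fin K) ℝ := (Din + S)⁻¹ with hN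
  have hNnn : ∀ k l, 0 ≤ N k l := by
    apply lemQ _ hNmat
    intro k l hkl
    have : (Din + S) k l = S k l := by
      simp [hDin, Matrix.diagonal_apply_ne _ hkl]
    rw [this]
    exact hOff k l hkl
  have h1 : D * Din = 1 := by
    rw [hD, hDin, diagonal_mul_diagonal,
      show (fun k => p k * (p k)⁻¹) = fun _ => (1:ℝ) from
        funext fun k => mul_inv_cancel₀ (hp k).ne', diagonal_one]
  have h2 : S⁻¹ * S = 1 := Matrix.nonsing_inv_mul S hSdet
  have h3 : (Din + S) * N = 1 := Matrix.mul_nonsing_inv _ hNdet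
  have hIdent : (S⁻¹ + D)⁻¹ = Din - Din * N * Din := by
    apply Matrix.inv_eq_right_inv
    calc (S⁻¹ + D) * (Din - Din * N * Din)
        = S⁻¹ * Din + D * Din - (S⁻¹ * Din + D * Din) * (N * Din) := by noncomm_ring
      _ = S⁻¹ * Din + 1 - (S⁻¹ * Din + S⁻¹ * S) * (N * Din) := by rw [h1, h2]
      _ = S⁻¹ * Din + 1 - S⁻¹ * (((Din + S) * N) * Din) := by noncomm_ring
      _ = S⁻¹ * Din + 1 - S⁻¹ * Din := by rw [h3, one_mul]
      _ = 1 := by noncomm_ring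
  constructor
  · -- part (a)
    set u : Fin K → ℝ := (S⁻¹ + D)⁻¹ *ᵥ α with hu
    set W : Matrix (Fin K) (Fin K) ℝ := D + D * S * D with hW
    have hWeq : W = D * (Din + S) * D := by
      rw [mul_add, h1, add_mul, one_mul]
    have hWpos : W.PosDef := by
      rw [hWeq]
      refine Matrix.PosDef.of_dotProduct_mulVec_pos ?_ ?_
      · have hDH : Dᴴ = D := by
          rw [hD, Matrix.diagonal_conjTranspose, star_trivial]
        have := Matrix.isHermitian_conjTranspose_mul_mul D hNmat.isHermitian
        rwa [hDH] at this
      · intro x hx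
        have hDx : D *ᵥ x ≠ 0 := by
          intro h0
          apply hx
          funext k
          have hk : (D *ᵥ x) k = 0 := by rw [h0]; rfl
          rw [hD, Matrix.mulVec_diagonal] at hk
          rcases mul_eq_zero.mp hk with h | h
          · exact absurd h (hp k).ne'
          · exact h
        have key := hNmat.dotProduct_mulVec_pos hDx
        rw [star_trivial] at key ⊢
        have hvm : x ᵥ* D = D *ᵥ x := by
          funext k
          rw [hD, Matrix.vecMul_diagonal, Matrix.mulVec_diagonal, mul_comm]
        rw [← Matrix.mulVec_mulVec, ← Matrix.mulVec_mulVec, Matrix.dotProduct_mulVec x D, hvm]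
        exact key
    have hWoff : ∀ k l, k ≠ l → W k l ≤ 0 := by
      intro k l hkl
      have : W k l = (D * S) k l * p l := by
        rw [hW]
        show (D + D * S * D) k l = _
        rw [Matrix.add_apply, hD, Matrix.diagonal_apply_ne _ hkl, zero_add,
          Matrix.mul_diagonal]
      rw [this, hD, Matrix.diagonal_mul]
      have h5 : p k * S k l ≤ 0 := mul_nonpos_iff.mpr (Or.inl ⟨(hp k).le, hOff k l hkl⟩)
      exact mul_nonpos_iff.mpr (Or.inr ⟨h5, (hp l).le⟩)
    have hTu : (S⁻¹ + D) *ᵥ u = α := by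
      rw [hu, Matrix.mulVec_mulVec, Matrix.mul_nonsing_inv _ hTdet, Matrix.one_mulVec]
    have hWT : W = (D * S) * (S⁻¹ + D) := by
      rw [mul_add, mul_assoc D S S⁻¹, Matrix.mul_nonsing_inv S hSdet, mul_one, hW]
    have hWu : ∀ k, 0 ≤ (W *ᵥ u) k := by
      intro k
      rw [hWT, ← Matrix.mulVec_mulVec, hTu, ← Matrix.mulVec_mulVec, hD,
        Matrix.mulVec_diagonal]
      exact mul_nonneg (hp k).le (hSα k)
    exact lemP W hWpos hWoff u hWu
  · -- part (b)
    intro k l hkl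
    rw [hIdent]
    show Din k l - (Din * N * Din) k l ≤ 0
    rw [hDin, Matrix.diagonal_apply_ne _ hkl, Matrix.mul_diagonal, Matrix.diagonal_mul]
    have := hNnn k l
    have h8 : (0:ℝ) ≤ (p k)⁻¹ * N k l * (p l)⁻¹ :=
      mul_nonneg (mul_nonneg (inv_nonneg.mpr (hp k).le) this) (inv_nonneg.mpr (hp l).le)
    linarith
attribute [local instance] Matrix.linftyOpNormedRing Matrix.linftyOpNormedAlgebra

noncomputable section

open ContinuousLinearMap in
/-- diagonal as a continuous linear map -/
def dCLM (K : ℕ) : (Fin K → ℝ) →L[ℝ] Matrix (Fin K) (Fin K) ℝ :=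
  LinearMap.toContinuousLinearMap (Matrix.diagonalLinearMap (Fin K) ℝ ℝ)

@[simp] lemma dCLM_apply {K : ℕ} (v : Fin K → ℝ) : dCLM K v = diagonal v := rfl

/-- M ↦ α ⬝ᵥ (M *ᵥ α) as a continuous linear map -/
def BCLM {K : ℕ} (α : Fin K → ℝ) : Matrix (Fin K) (Fin K) ℝ →L[ℝ] ℝ :=
  LinearMap.toContinuousLinearMap
    { toFun := fun M => α ⬝ᵥ (M *ᵥ α)
      map_add' := fun M N => by simp [Matrix.add_mulVec, dotProduct_add]
      map_smul' := fun c M => by simp [Matrix.smul_mulVec] }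

@[simp] lemma BCLM_apply {K : ℕ} (α : Fin K → ℝ) (M : Matrix (Fin K) (Fin K) ℝ) :
    BCLM α M = α ⬝ᵥ (M *ᵥ α) := rfl

/-- M ↦ (M *ᵥ α) i as a continuous linear map -/
def eCLM {K : ℕ} (α : Fin K → ℝ) (i : Fin K) : Matrix (Fin K) (Fin K) ℝ →L[ℝ] ℝ :=
  LinearMap.toContinuousLinearMap
    { toFun := fun M => (M *ᵥ α) i
      map_add' := fun M N => by simp [Matrix.add_mulVec]
      map_smul' := fun c M => by simp [Matrix.smul_mulVec] }

@[simp] lemma eCLM_apply {K : ℕ} (α : Fin K → ℝ) (i : Fin K)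
    (M : Matrix (Fin K) (Fin K) ℝ) : eCLM α i M = (M *ᵥ α) i := rfl

/-- entry extraction as a continuous linear map -/
def entCLM {K : ℕ} (i j : Fin K) : Matrix (Fin K) (Fin K) ℝ →L[ℝ] ℝ :=
  LinearMap.toContinuousLinearMap
    { toFun := fun M => M i j
      map_add' := fun _ _ => rfl
      map_smul' := fun _ _ => rfl }

@[simp] lemma entCLM_apply {K : ℕ} (i j : Fin K) (M : Matrix (Fin K) (Fin K) ℝ) :
    entCLM i j M = M i j := rfl

lemma diag_single_mulVec {K : ℕ} (t : Fin K) (w : Fin K → ℝ) :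
    diagonal (Pi.single t 1) *ᵥ w = Pi.single t (w t) := by
  funext k
  rw [Matrix.mulVec_diagonal]
  rcases eq_or_ne k t with rfl | h
  · simp
  · simp [Pi.single_eq_of_ne h]

lemma eval_e {K : ℕ} (M : Matrix (Fin K) (Fin K) ℝ) (α : Fin K → ℝ) (i t : Fin K) :
    ((M * diagonal (Pi.single t 1) * M) *ᵥ α) i = M i t * ((M *ᵥ α) t) := by
  rw [← Matrix.mulVec_mulVec, ← Matrix.mulVec_mulVec, diag_single_mulVec,
    Matrix.mulVec_single]
  rfl

lemma eval_B {K : ℕ} (M : Matrix (Fin K) (Fin K) ℝ) (hsym : Mᵀ = M) (α : Fin K → ℝ)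
    (t : Fin K) :
    α ⬝ᵥ ((M * diagonal (Pi.single t 1) * M) *ᵥ α) = ((M *ᵥ α) t) * ((M *ᵥ α) t) := by
  rw [← Matrix.mulVec_mulVec, ← Matrix.mulVec_mulVec, diag_single_mulVec,
    Matrix.mulVec_single]
  calc α ⬝ᵥ (fun k => M k t * (M *ᵥ α) t)
      = ∑ k, M t k * α k * (M *ᵥ α) t := by
        apply Finset.sum_congr rfl
        intro k _
        show α k * (M k t * (M *ᵥ α) t) = M t k * α k * (M *ᵥ α) t
        have h : M k t = M t k :=
          (congrFun (congrFun hsym k) t).symm.trans (Matrix.transpose_apply M k t)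
        rw [h]; ring
    _ = (M *ᵥ α) t * (M *ᵥ α) t := by
        rw [← Finset.sum_mul]; rfl

end
noncomputable section
open ContinuousLinearMap

variable {K : ℕ}

lemma hasFDerivAt_ringInverse_T (S : Matrix (Fin K) (Fin K) ℝ) (p : Fin K → ℝ)
    (hu : IsUnit (S⁻¹ + diagonal p)) :
    HasFDerivAt (fun r : Fin K → ℝ => Ring.inverse (S⁻¹ + diagonal r))
      ((-(mulLeftRight ℝ (Matrix (Fin K) (Fin K) ℝ)
          (Ring.inverse (S⁻¹ + diagonal p)) (Ring.inverse (S⁻¹ + diagonal p)))).comp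
        (dCLM K)) p := by
  have hinner : HasFDerivAt (fun r : Fin K → ℝ => S⁻¹ + diagonal r) (dCLM K) p := by
    have h := ((dCLM K).hasFDerivAt (x := p)).const_add S⁻¹
    exact h
  have hx : (hu.unit : Matrix (Fin K) (Fin K) ℝ) = S⁻¹ + diagonal p := hu.unit_spec
  have hxi : ((hu.unit⁻¹ : _ˣ) : Matrix (Fin K) (Fin K) ℝ)
      = Ring.inverse (S⁻¹ + diagonal p) := by
    conv_rhs => rw [← hx]
    exact (Ring.inverse_unit _).symm
  have H := hasFDerivAt_ringInverse (𝕜 := ℝ) hu.unit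
  rw [hx, hxi] at H
  exact H.comp p hinner

lemma hasFDerivAt_comp_clm (S : Matrix (Fin K) (Fin K) ℝ) (p : Fin K → ℝ)
    (hu : IsUnit (S⁻¹ + diagonal p)) (φ : Matrix (Fin K) (Fin K) ℝ →L[ℝ] ℝ) :
    HasFDerivAt (fun r : Fin K → ℝ => φ (Ring.inverse (S⁻¹ + diagonal r)))
      (φ.comp ((-(mulLeftRight ℝ (Matrix (Fin K) (Fin K) ℝ)
          (Ring.inverse (S⁻¹ + diagonal p)) (Ring.inverse (S⁻¹ + diagonal p)))).comp
        (dCLM K))) p :=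
  (φ.hasFDerivAt).comp p (hasFDerivAt_ringInverse_T S p hu)

end
set_option maxHeartbeats 1000000 in
open ContinuousLinearMap in
theorem stmt_8 {K : ℕ} (S : Matrix (Fin K) (Fin K) ℝ) (hS : S.PosDef)
    (hOff : ∀ i j, i ≠ j → S i j ≤ 0)
    (α : Fin K → ℝ) (hα : ∀ i, 0 < α i)
    (hSα : ∀ i, 0 ≤ (S *ᵥ α) i)
    (q : Fin K → ℝ) (hq : ∀ i, 0 ≤ q i) (i j : Fin K) (hij : i ≠ j) :
    fderiv ℝ
        (fun p : Fin K → ℝ =>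
          fderiv ℝ (fun r : Fin K → ℝ => α ⬝ᵥ ((S⁻¹ + diagonal r)⁻¹ *ᵥ α)) p
            (Pi.single i 1))
        q (Pi.single j 1) ≤ 0 := by
  classical
  have hconv : ∀ A : Matrix (Fin K) (Fin K) ℝ, A⁻¹ = Ring.inverse A := fun A =>
    Matrix.nonsing_inv_eq_ringInverse A
  -- symmetry
  have hSsym : Sᵀ = S := by
    have h := hS.isHermitian.eq
    rwa [Matrix.conjTranspose_eq_transpose_of_trivial] at h
  have hMsym : ∀ p : Fin K → ℝ, (Ring.inverse (S⁻¹ + diagonal p) :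
      Matrix (Fin K) (Fin K) ℝ)ᵀ = Ring.inverse (S⁻¹ + diagonal p) := by
    intro p
    rw [← hconv, Matrix.transpose_nonsing_inv, Matrix.transpose_add,
      Matrix.diagonal_transpose, Matrix.transpose_nonsing_inv, hSsym]
  -- pos def and invertibility
  have hTpos : ∀ p : Fin K → ℝ, (∀ k, 0 ≤ p k) → (S⁻¹ + diagonal p).PosDef := fun p hp =>
    (hS.inv).add_posSemidef (Matrix.posSemidef_diagonal_iff.mpr hp)
  have hTq : IsUnit (S⁻¹ + diagonal q) := (hTpos q hq).isUnit
  -- open set of invertibility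
  have hUopen : IsOpen {p : Fin K → ℝ | IsUnit (S⁻¹ + diagonal p)} := by
    have hcont : Continuous fun p : Fin K → ℝ => S⁻¹ + diagonal p :=
      continuous_const.add (dCLM K).continuous
    exact Units.isOpen.preimage hcont
  -- the middle function
  have hmid : ∀ p ∈ {p : Fin K → ℝ | IsUnit (S⁻¹ + diagonal p)},
      fderiv ℝ (fun r : Fin K → ℝ => α ⬝ᵥ ((S⁻¹ + diagonal r)⁻¹ *ᵥ α)) p
          (Pi.single i 1)
        = -(((Ring.inverse (S⁻¹ + diagonal p) : Matrix (Fin K) (Fin K) ℝ) *ᵥ α) i *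
            ((Ring.inverse (S⁻¹ + diagonal p) : Matrix (Fin K) (Fin K) ℝ) *ᵥ α) i) := by
    intro p hu
    have hfun : (fun r : Fin K → ℝ => α ⬝ᵥ ((S⁻¹ + diagonal r)⁻¹ *ᵥ α))
        = fun r : Fin K → ℝ => BCLM α (Ring.inverse (S⁻¹ + diagonal r)) := by
      funext r
      rw [BCLM_apply, hconv (S⁻¹ + diagonal r)]
    rw [hfun, (hasFDerivAt_comp_clm S p hu (BCLM α)).fderiv]
    show BCLM α (-(Ring.inverse (S⁻¹ + diagonal p) * diagonal (Pi.single i 1) *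
      Ring.inverse (S⁻¹ + diagonal p))) = _
    rw [map_neg, BCLM_apply]
    rw [eval_B _ (hMsym p) α i]
  have hev : (fun p : Fin K → ℝ =>
      fderiv ℝ (fun r : Fin K → ℝ => α ⬝ᵥ ((S⁻¹ + diagonal r)⁻¹ *ᵥ α)) p
        (Pi.single i 1)) =ᶠ[nhds q]
      (fun p : Fin K → ℝ =>
        -(((Ring.inverse (S⁻¹ + diagonal p) : Matrix (Fin K) (Fin K) ℝ) *ᵥ α) i *
          ((Ring.inverse (S⁻¹ + diagonal p) : Matrix (Fin K) (Fin K) ℝ) *ᵥ α) i)) :=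
    Filter.eventually_of_mem (hUopen.mem_nhds hTq) hmid
  rw [hev.fderiv_eq]
  -- derivative of the coordinate functions
  have hui : ∀ t : Fin K, HasFDerivAt
      (fun p : Fin K → ℝ =>
        ((Ring.inverse (S⁻¹ + diagonal p) : Matrix (Fin K) (Fin K) ℝ) *ᵥ α) t)
      ((eCLM α t).comp ((-(mulLeftRight ℝ (Matrix (Fin K) (Fin K) ℝ)
          (Ring.inverse (S⁻¹ + diagonal q)) (Ring.inverse (S⁻¹ + diagonal q)))).comp
        (dCLM K))) q := fun t => hasFDerivAt_comp_clm S q hTq (eCLM α t)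
  have hprod := ((hui i).mul (hui i)).neg
  erw [hprod.fderiv]
  -- evaluate the derivative at the direction
  set M : Matrix (Fin K) (Fin K) ℝ := Ring.inverse (S⁻¹ + diagonal q) with hM
  set u : Fin K → ℝ := M *ᵥ α with hu
  have heval : ((eCLM α i).comp ((-(mulLeftRight ℝ (Matrix (Fin K) (Fin K) ℝ) M M)).comp
      (dCLM K))) (Pi.single j 1) = -(M i j * u j) := by
    show eCLM α i (-(M * diagonal (Pi.single j 1) * M)) = _
    rw [map_neg, eCLM_apply]
    rw [eval_e M α i j]
  -- the key sign fact at q, by approximation from strictly positive p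
  have hsign : u i * (M i j * u j) ≤ 0 := by
    have hkey : ∀ p : Fin K → ℝ, (∀ k, 0 < p k) →
        ((Ring.inverse (S⁻¹ + diagonal p) : Matrix (Fin K) (Fin K) ℝ) *ᵥ α) i *
          ((Ring.inverse (S⁻¹ + diagonal p) : Matrix (Fin K) (Fin K) ℝ) i j *
            ((Ring.inverse (S⁻¹ + diagonal p) : Matrix (Fin K) (Fin K) ℝ) *ᵥ α) j) ≤ 0 := by
      intro p hp
      obtain ⟨ha, hb⟩ := keySigns S hS hOff α hSα p hp
      rw [← hconv]
      have h1 := ha i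
      have h2 := ha j
      have h3 := hb i j hij
      have h4 : (S⁻¹ + diagonal p)⁻¹ i j * ((S⁻¹ + diagonal p)⁻¹ *ᵥ α) j ≤ 0 :=
        mul_nonpos_iff.mpr (Or.inr ⟨h3, h2⟩)
      exact mul_nonpos_iff.mpr (Or.inl ⟨h1, h4⟩)
    -- continuity of the expression at q
    have hMc : ContinuousAt
        (fun p : Fin K → ℝ => (Ring.inverse (S⁻¹ + diagonal p) : Matrix (Fin K) (Fin K) ℝ))
        q := (hasFDerivAt_ringInverse_T S q hTq).continuousAt
    have hEc : ContinuousAt (fun p : Fin K → ℝ =>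
        ((Ring.inverse (S⁻¹ + diagonal p) : Matrix (Fin K) (Fin K) ℝ) *ᵥ α) i *
          ((Ring.inverse (S⁻¹ + diagonal p) : Matrix (Fin K) (Fin K) ℝ) i j *
            ((Ring.inverse (S⁻¹ + diagonal p) : Matrix (Fin K) (Fin K) ℝ) *ᵥ α) j)) q := by
      have c1 : ContinuousAt (fun p : Fin K → ℝ =>
          ((Ring.inverse (S⁻¹ + diagonal p) : Matrix (Fin K) (Fin K) ℝ) *ᵥ α) i) q :=
        ((eCLM α i).continuous.continuousAt).comp hMc
      have c2 : ContinuousAt (fun p : Fin K → ℝ =>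
          ((Ring.inverse (S⁻¹ + diagonal p) : Matrix (Fin K) (Fin K) ℝ) *ᵥ α) j) q :=
        ((eCLM α j).continuous.continuousAt).comp hMc
      have c3 : ContinuousAt (fun p : Fin K → ℝ =>
          (Ring.inverse (S⁻¹ + diagonal p) : Matrix (Fin K) (Fin K) ℝ) i j) q :=
        ((entCLM i j).continuous.continuousAt).comp hMc
      exact c1.mul (c3.mul c2)
    -- path from strictly positive points
    have hpath : Filter.Tendsto (fun t : ℝ => q + t • (fun _ : Fin K => (1:ℝ)))
        (nhdsWithin 0 (Set.Ioi 0)) (nhds q) := by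
      have hc : Continuous (fun t : ℝ => q + t • (fun _ : Fin K => (1:ℝ))) :=
        continuous_const.add (continuous_id.smul continuous_const)
      have h0 : q + (0:ℝ) • (fun _ : Fin K => (1:ℝ)) = q := by simp
      have h1 : Filter.Tendsto (fun t : ℝ => q + t • (fun _ : Fin K => (1:ℝ)))
          (nhds 0) (nhds q) := by
        have h2 := hc.continuousAt (x := (0:ℝ))
        rwa [ContinuousAt, h0] at h2
      exact h1.mono_left nhdsWithin_le_nhds
    have hlim := (hEc.tendsto.comp hpath)
    have hevent : ∀ᶠ t in nhdsWithin (0:ℝ) (Set.Ioi 0),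
        (fun p : Fin K → ℝ =>
          ((Ring.inverse (S⁻¹ + diagonal p) : Matrix (Fin K) (Fin K) ℝ) *ᵥ α) i *
            ((Ring.inverse (S⁻¹ + diagonal p) : Matrix (Fin K) (Fin K) ℝ) i j *
              ((Ring.inverse (S⁻¹ + diagonal p) : Matrix (Fin K) (Fin K) ℝ) *ᵥ α) j))
          ((fun t : ℝ => q + t • (fun _ : Fin K => (1:ℝ))) t) ≤ 0 := by
      apply Filter.eventually_of_mem self_mem_nhdsWithin
      intro t ht
      apply hkey
      intro k
      have ht' : (0:ℝ) < t := ht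
      simp only [Pi.add_apply, Pi.smul_apply, smul_eq_mul, mul_one]
      exact add_pos_of_nonneg_of_pos (hq k) ht' 
    exact le_of_tendsto hlim hevent
  -- finish
  simp only [ContinuousLinearMap.neg_apply, ContinuousLinearMap.add_apply,
    ContinuousLinearMap.smul_apply, smul_eq_mul]
  rw [heval]
  nlinarith [hsign]
end
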